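/- arXiv:1302.2743 — 2 statements merged into one kernel-verified Lean document; each statement's English description precedes it below -/
import Mathlib

section
/- Let p ∈ [0,1], p̄ = 1 − p, and let A : ℕ × ℕ → ℝ be finitely supported with ∑_{k,l} A(k,l) ≠ 0, ∑_{k,l} k·A(k,l) ≠ 0 and ∑_{k,l} l·A(k,l) ≠ 0. Define α = (∑_{k,l} l(l−1)A(k,l))/(∑_{k,l} l·A(k,l)), β = (∑_{k,l} k·l·A(k,l))/(∑_{k,l} k·A(k,l)), γ = (∑_{k,l} l·A(k,l))/(∑_{k,l} A(k,l)), and define B : ℕ × ℕ → ℝ by B(k,l) = (p̄/2)(1+α)[(l+1)A(k−1,l+1) − l·A(k,l)] + (p̄β/2)[(k+1)A(k+1,l−1) − k·A(k,l)] + (p/2)[(l+1)A(k−1,l+1) − l·A(k,l)] + (p/2)[(l+1)A(k,l+1) − l·A(k,l)] + (pγ/2)[A(k−1,l) − A(k,l)] (terms with negative indices being zero). Then for all real x, y: ∑_{k,l} B(k,l) x^k y^l = (p̄β/2)(y−x)·Q_x(x,y) + [ (p̄/2)(x−y) + (p̄α/2)(x−y) + (p/2)(x−y) + (p/2)(1−y)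 ]·Q_y(x,y) + (pγ/2)(x−1)·Q(x,y). -/
private lemma shift_lemma (F G : ℕ → ℝ) (n : ℕ) (h0 : F 0 = 0)
    (hFG : ∀ i, F (i + 1) = G i) (hGn : G n = 0) :
    ∑ i ∈ Finset.range (n + 1), F i = ∑ i ∈ Finset.range (n + 1), G i := by
  rw [Finset.sum_range_succ' F, Finset.sum_range_succ, h0, hGn, add_zero, add_zero]
  exact Finset.sum_congr rfl fun i _ => hFG i

private lemma tsum_tsum_eq_sum (f : ℕ → ℕ → ℝ) (M : ℕ)
    (h : ∀ k l, M ≤ k ∨ M ≤ l → f k l = 0) :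
    ∑' k : ℕ, ∑' l : ℕ, f k l = ∑ k ∈ Finset.range M, ∑ l ∈ Finset.range M, f k l := by
  have hin : ∀ k, ∑' l : ℕ, f k l = ∑ l ∈ Finset.range M, f k l := fun k =>
    tsum_eq_sum fun l hl => h k l (Or.inr (by simp only [Finset.mem_range, not_lt] at hl; exact hl))
  have hout : ∑' k : ℕ, ∑' l : ℕ, f k l = ∑ k ∈ Finset.range M, ∑' l : ℕ, f k l :=
    tsum_eq_sum fun k hk => by
      rw [hin k]
      exact Finset.sum_eq_zero fun l _ =>
        h k l (Or.inl (by simp only [Finset.mem_range, not_lt] at hk; exact hk))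
  rw [hout]
  exact Finset.sum_congr rfl fun k _ => hin k

private lemma S1_eq (A : ℕ → ℕ → ℝ) (N : ℕ) (hN : ∀ k l, N ≤ k ∨ N ≤ l → A k l = 0)
    (x y : ℝ) :
    ∑ k ∈ Finset.range (N + 2), ∑ l ∈ Finset.range (N + 2),
        ((l : ℝ) + 1) * (if k = 0 then 0 else A (k - 1) (l + 1)) * x ^ k * y ^ l
      = x * ∑ k ∈ Finset.range (N + 2), ∑ l ∈ Finset.range (N + 2),
          A k l * x ^ k * ((l : ℝ) * y ^ (l - 1)) := by
  rw [Finset.mul_sum]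
  refine shift_lemma _ _ (N + 1) ?_ ?_ ?_
  · simp
  · intro i
    simp only [Nat.succ_ne_zero, if_false, Nat.add_sub_cancel]
    rw [Finset.mul_sum]
    refine (shift_lemma _ _ (N + 1) ?_ ?_ ?_).symm
    · simp
    · intro j; push_cast; ring
    · rw [hN i (N + 1 + 1) (Or.inr (by omega))]; ring
  · rw [Finset.sum_eq_zero (fun l _ => by rw [hN (N + 1) l (Or.inl (by omega))]; ring), mul_zero]

private lemma S2_eq (A : ℕ → ℕ → ℝ) (N : ℕ) (hN : ∀ k l, N ≤ k ∨ N ≤ l → A k l = 0)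
    (x y : ℝ) :
    ∑ k ∈ Finset.range (N + 2), ∑ l ∈ Finset.range (N + 2),
        ((k : ℝ) + 1) * (if l = 0 then 0 else A (k + 1) (l - 1)) * x ^ k * y ^ l
      = y * ∑ k ∈ Finset.range (N + 2), ∑ l ∈ Finset.range (N + 2),
          A k l * ((k : ℝ) * x ^ (k - 1)) * y ^ l := by
  rw [Finset.mul_sum]
  refine (shift_lemma _ _ (N + 1) ?_ ?_ ?_).symm
  · simp
  · intro i
    rw [Finset.mul_sum]
    refine (shift_lemma _ _ (N + 1) ?_ ?_ ?_).symm
    · simp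
    · intro j
      simp only [Nat.succ_ne_zero, if_false, Nat.add_sub_cancel]
      push_cast; ring
    · have : A (i + 1) (N + 1) = 0 := hN (i + 1) (N + 1) (Or.inr (by omega))
      rw [this]; ring
  · refine Finset.sum_eq_zero fun l _ => ?_
    rcases Nat.eq_zero_or_pos l with hl | hl
    · subst hl; simp
    · rw [if_neg (by omega), hN (N + 1 + 1) (l - 1) (Or.inl (by omega))]; ring

private lemma S3_eq (A : ℕ → ℕ → ℝ) (N : ℕ) (hN : ∀ k l, N ≤ k ∨ N ≤ l → A k l = 0)
    (x y : ℝ) :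
    ∑ k ∈ Finset.range (N + 2), ∑ l ∈ Finset.range (N + 2),
        ((l : ℝ) + 1) * A k (l + 1) * x ^ k * y ^ l
      = ∑ k ∈ Finset.range (N + 2), ∑ l ∈ Finset.range (N + 2),
          A k l * x ^ k * ((l : ℝ) * y ^ (l - 1)) := by
  refine Finset.sum_congr rfl fun k _ => ?_
  refine (shift_lemma _ _ (N + 1) ?_ ?_ ?_).symm
  · simp
  · intro j; push_cast; ring
  · rw [hN k (N + 1 + 1) (Or.inr (by omega))]; ring

private lemma S4_eq (A : ℕ → ℕ → ℝ) (N : ℕ) (hN : ∀ k l, N ≤ k ∨ N ≤ l → A k l = 0)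
    (x y : ℝ) :
    ∑ k ∈ Finset.range (N + 2), ∑ l ∈ Finset.range (N + 2),
        (if k = 0 then 0 else A (k - 1) l) * x ^ k * y ^ l
      = x * ∑ k ∈ Finset.range (N + 2), ∑ l ∈ Finset.range (N + 2),
          A k l * x ^ k * y ^ l := by
  rw [Finset.mul_sum]
  refine shift_lemma _ _ (N + 1) ?_ ?_ ?_
  · simp
  · intro i
    simp only [Nat.succ_ne_zero, if_false, Nat.add_sub_cancel]
    rw [Finset.mul_sum]
    exact Finset.sum_congr rfl fun l _ => by ring
  · rw [Finset.sum_eq_zero (fun l _ => by rw [hN (N + 1) l (Or.inl (by omega))]; ring), mul_zero]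

private lemma P1_eq (A : ℕ → ℕ → ℝ) (M : ℕ) (x y : ℝ) :
    ∑ k ∈ Finset.range M, ∑ l ∈ Finset.range M, (l : ℝ) * A k l * x ^ k * y ^ l
      = y * ∑ k ∈ Finset.range M, ∑ l ∈ Finset.range M,
          A k l * x ^ k * ((l : ℝ) * y ^ (l - 1)) := by
  rw [Finset.mul_sum]
  refine Finset.sum_congr rfl fun k _ => ?_
  rw [Finset.mul_sum]
  refine Finset.sum_congr rfl fun l _ => ?_
  rcases l with _ | j
  · simp
  · simp only [Nat.add_sub_cancel]; push_cast; ring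

private lemma P2_eq (A : ℕ → ℕ → ℝ) (M : ℕ) (x y : ℝ) :
    ∑ k ∈ Finset.range M, ∑ l ∈ Finset.range M, (k : ℝ) * A k l * x ^ k * y ^ l
      = x * ∑ k ∈ Finset.range M, ∑ l ∈ Finset.range M,
          A k l * ((k : ℝ) * x ^ (k - 1)) * y ^ l := by
  rw [Finset.mul_sum]
  refine Finset.sum_congr rfl fun k _ => ?_
  rw [Finset.mul_sum]
  refine Finset.sum_congr rfl fun l _ => ?_
  rcases k with _ | j
  · simp
  · simp only [Nat.add_sub_cancel]; push_cast; ring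

/-- The generating function `Q(x,y) = ∑_{k,l} A(k,l) x^k y^l` of a finitely
supported family of coefficients `A : ℕ × ℕ → ℝ`. -/
noncomputable def genFun (A : ℕ → ℕ → ℝ) (x y : ℝ) : ℝ :=
  ∑' k : ℕ, ∑' l : ℕ, A k l * x ^ k * y ^ l

/-- The generating-function PDE right-hand side for the heterogeneous
active-neighborhood expansion of the adaptive voter model: if `B(k,l)` is the
right-hand side of the heterogeneous ODE (with the moment-closure factors
`α`, `β`, `γ`), then
`∑_{k,l} B(k,l) x^k y^l = (p̄β/2)(y−x)Q_x + [(p̄/2)(x−y) + (p̄α/2)(x−y) + (p/2)(x−y) + (p/2)(1−y)]Q_y + (pγ/2)(x−1)Q`. -/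
theorem voter_pde_rhs (p : ℝ) (hp : p ∈ Set.Icc (0 : ℝ) 1)
    (A : ℕ → ℕ → ℝ)
    (hA : (Function.support fun q : ℕ × ℕ => A q.1 q.2).Finite)
    (hS0 : (∑' k : ℕ, ∑' l : ℕ, A k l) ≠ 0)
    (hSk : (∑' k : ℕ, ∑' l : ℕ, (k : ℝ) * A k l) ≠ 0)
    (hSl : (∑' k : ℕ, ∑' l : ℕ, (l : ℝ) * A k l) ≠ 0)
    (α β γ : ℝ)
    (hα : α = (∑' k : ℕ, ∑' l : ℕ, (l : ℝ) * ((l : ℝ) - 1) * A k l)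
            / (∑' k : ℕ, ∑' l : ℕ, (l : ℝ) * A k l))
    (hβ : β = (∑' k : ℕ, ∑' l : ℕ, (k : ℝ) * (l : ℝ) * A k l)
            / (∑' k : ℕ, ∑' l : ℕ, (k : ℝ) * A k l))
    (hγ : γ = (∑' k : ℕ, ∑' l : ℕ, (l : ℝ) * A k l)
            / (∑' k : ℕ, ∑' l : ℕ, A k l))
    (B : ℕ → ℕ → ℝ)
    (hB : ∀ k l : ℕ, B k l =
        ((1 - p) / 2) * (1 + α) *
          (((l : ℝ) + 1) * (if k = 0 then 0 else A (k - 1) (l + 1)) - (l : ℝ) * A k l)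
      + ((1 - p) * β / 2) *
          (((k : ℝ) + 1) * (if l = 0 then 0 else A (k + 1) (l - 1)) - (k : ℝ) * A k l)
      + (p / 2) *
          (((l : ℝ) + 1) * (if k = 0 then 0 else A (k - 1) (l + 1)) - (l : ℝ) * A k l)
      + (p / 2) * (((l : ℝ) + 1) * A k (l + 1) - (l : ℝ) * A k l)
      + (p * γ / 2) * ((if k = 0 then 0 else A (k - 1) l) - A k l))
    (x y : ℝ) :
    ∑' k : ℕ, ∑' l : ℕ, B k l * x ^ k * y ^ l
      = ((1 - p) * β / 2) * (y - x) * deriv (fun x' : ℝ => genFun A x' y) x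
      + (((1 - p) / 2) * (x - y) + ((1 - p) * α / 2) * (x - y)
          + (p / 2) * (x - y) + (p / 2) * (1 - y))
          * deriv (fun y' : ℝ => genFun A x y') y
      + (p * γ / 2) * (x - 1) * genFun A x y := by
  classical
  obtain ⟨N, hN⟩ : ∃ N : ℕ, ∀ k l : ℕ, N ≤ k ∨ N ≤ l → A k l = 0 := by
    refine ⟨(hA.toFinset.sup fun q => max q.1 q.2) + 1, fun k l h => ?_⟩
    by_contra hne
    have hmem : (k, l) ∈ hA.toFinset := by
      simp only [Set.Finite.mem_toFinset, Function.mem_support]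
      exact hne
    have hle := Finset.le_sup (f := fun q : ℕ × ℕ => max q.1 q.2) hmem
    simp only [max_le_iff] at hle
    omega
  -- the generating function as a finite sum
  have hQeq : ∀ x' y' : ℝ, genFun A x' y'
      = ∑ k ∈ Finset.range (N + 2), ∑ l ∈ Finset.range (N + 2), A k l * x' ^ k * y' ^ l :=
    fun x' y' => tsum_tsum_eq_sum _ _ fun k l h => by rw [hN k l (by omega)]; ring
  -- the left-hand side as a finite sum
  have hBz : ∀ k l : ℕ, N + 2 ≤ k ∨ N + 2 ≤ l → B k l * x ^ k * y ^ l = 0 := by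
    intro k l h
    rw [hB]
    have h1 : A k l = 0 := hN k l (by omega)
    have h2 : A k (l + 1) = 0 := hN k (l + 1) (by omega)
    have h3 : (if k = 0 then 0 else A (k - 1) (l + 1)) = (0 : ℝ) := by
      split_ifs with hk
      · rfl
      · exact hN _ _ (by omega)
    have h4 : (if l = 0 then 0 else A (k + 1) (l - 1)) = (0 : ℝ) := by
      split_ifs with hl
      · rfl
      · exact hN _ _ (by omega)
    have h5 : (if k = 0 then 0 else A (k - 1) l) = (0 : ℝ) := by
      split_ifs with hk
      · rfl
      · exact hN _ _ (by omega)
    rw [h1, h2, h3, h4, h5]; ring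
  have hL : (∑' k : ℕ, ∑' l : ℕ, B k l * x ^ k * y ^ l)
      = ∑ k ∈ Finset.range (N + 2), ∑ l ∈ Finset.range (N + 2), B k l * x ^ k * y ^ l :=
    tsum_tsum_eq_sum _ _ hBz
  -- the partial derivative in x
  have hfx : (fun x' : ℝ => genFun A x' y)
      = fun x' : ℝ => ∑ k ∈ Finset.range (N + 2),
          (∑ l ∈ Finset.range (N + 2), A k l * y ^ l) * x' ^ k := by
    funext x'
    rw [hQeq x' y]
    refine Finset.sum_congr rfl fun k _ => ?_
    rw [Finset.sum_mul]
    exact Finset.sum_congr rfl fun l _ => by ring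
  have hdx : deriv (fun x' : ℝ => genFun A x' y) x
      = ∑ k ∈ Finset.range (N + 2), ∑ l ∈ Finset.range (N + 2),
          A k l * ((k : ℝ) * x ^ (k - 1)) * y ^ l := by
    rw [hfx, deriv_fun_sum fun k _ => (differentiableAt_pow k).const_mul _]
    refine Finset.sum_congr rfl fun k _ => ?_
    rw [deriv_const_mul _ (differentiableAt_pow k), deriv_pow_field, Finset.sum_mul]
    exact Finset.sum_congr rfl fun l _ => by ring
  -- the partial derivative in y
  have hfy : (fun y' : ℝ => genFun A x y')
      = fun y' : ℝ => ∑ l ∈ Finset.range (N + 2),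
          (∑ k ∈ Finset.range (N + 2), A k l * x ^ k) * y' ^ l := by
    funext y'
    rw [hQeq x y', Finset.sum_comm]
    refine Finset.sum_congr rfl fun l _ => ?_
    rw [Finset.sum_mul]
  have hdy : deriv (fun y' : ℝ => genFun A x y') y
      = ∑ k ∈ Finset.range (N + 2), ∑ l ∈ Finset.range (N + 2),
          A k l * x ^ k * ((l : ℝ) * y ^ (l - 1)) := by
    rw [hfy, deriv_fun_sum fun l _ => (differentiableAt_pow l).const_mul _]
    have h1 : ∀ l ∈ Finset.range (N + 2),
        deriv (fun y' : ℝ => (∑ k ∈ Finset.range (N + 2), A k l * x ^ k) * y' ^ l) y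
          = ∑ k ∈ Finset.range (N + 2), A k l * x ^ k * ((l : ℝ) * y ^ (l - 1)) := fun l _ => by
      rw [deriv_const_mul _ (differentiableAt_pow l), deriv_pow_field, Finset.sum_mul]
    rw [Finset.sum_congr rfl h1]
    exact Finset.sum_comm
  -- split the finite sum of `B` into the shifted pieces
  have stepA : ∑ k ∈ Finset.range (N + 2), ∑ l ∈ Finset.range (N + 2), B k l * x ^ k * y ^ l
      = ((1 - p) / 2) * (1 + α) *
          ((∑ k ∈ Finset.range (N + 2), ∑ l ∈ Finset.range (N + 2),
              ((l : ℝ) + 1) * (if k = 0 then 0 else A (k - 1) (l + 1)) * x ^ k * y ^ l)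
           - ∑ k ∈ Finset.range (N + 2), ∑ l ∈ Finset.range (N + 2),
              (l : ℝ) * A k l * x ^ k * y ^ l)
      + ((1 - p) * β / 2) *
          ((∑ k ∈ Finset.range (N + 2), ∑ l ∈ Finset.range (N + 2),
              ((k : ℝ) + 1) * (if l = 0 then 0 else A (k + 1) (l - 1)) * x ^ k * y ^ l)
           - ∑ k ∈ Finset.range (N + 2), ∑ l ∈ Finset.range (N + 2),
              (k : ℝ) * A k l * x ^ k * y ^ l)
      + (p / 2) *
          ((∑ k ∈ Finset.range (N + 2), ∑ l ∈ Finset.range (N + 2),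
              ((l : ℝ) + 1) * (if k = 0 then 0 else A (k - 1) (l + 1)) * x ^ k * y ^ l)
           - ∑ k ∈ Finset.range (N + 2), ∑ l ∈ Finset.range (N + 2),
              (l : ℝ) * A k l * x ^ k * y ^ l)
      + (p / 2) *
          ((∑ k ∈ Finset.range (N + 2), ∑ l ∈ Finset.range (N + 2),
              ((l : ℝ) + 1) * A k (l + 1) * x ^ k * y ^ l)
           - ∑ k ∈ Finset.range (N + 2), ∑ l ∈ Finset.range (N + 2),
              (l : ℝ) * A k l * x ^ k * y ^ l)
      + (p * γ / 2) *
          ((∑ k ∈ Finset.range (N + 2), ∑ l ∈ Finset.range (N + 2),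
              (if k = 0 then 0 else A (k - 1) l) * x ^ k * y ^ l)
           - ∑ k ∈ Finset.range (N + 2), ∑ l ∈ Finset.range (N + 2),
              A k l * x ^ k * y ^ l) := by
    simp only [mul_sub, Finset.mul_sum, ← Finset.sum_sub_distrib, ← Finset.sum_add_distrib]
    refine Finset.sum_congr rfl fun k _ => Finset.sum_congr rfl fun l _ => ?_
    rw [hB k l]; ring
  rw [hL, stepA, S1_eq A N hN x y, S2_eq A N hN x y, S3_eq A N hN x y, S4_eq A N hN x y,
    P1_eq A (N + 2) x y, P2_eq A (N + 2) x y, hdx, hdy, hQeq x y]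
  ring
end

section
/- Suppose A : ℕ × ℕ → ℝ → ℝ is a family of differentiable functions of time with uniformly finite support (there is a finite set S ⊂ ℕ × ℕ such that A(k,l)(t) = 0 for all t whenever (k,l) ∉ S), and fix real numbers a, b, c, d. If at every time t each coefficient satisfies (d/dt)A(k,l)(t) = a[(l+1)A(k−1,l+1)(t) − l·A(k,l)(t)] + b[(k+1)A(k+1,l−1)(t) − k·A(k,l)(t)] + c[(l+1)A(k,l+1)(t) − l·A(k,l)(t)] + d[A(k−1,l)(t) − A(k,l)(t)] (terms with negative indices being zero), then the function Q(x,y,t) = ∑_{k,l} A(k,l)(t) x^k y^l is differentiable in t and satisfies, for all x, y, t: ∂Q/∂t = b(y−x)·Q_x + [a(x−y) + c(1−y)]·Q_y + d(x−1)·Q. -/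
lemma genFun_sum_shift (N : ℕ) (f : ℕ → ℝ) (z : ℝ) (h : f (N+1) = 0) :
    ∑ i ∈ Finset.range (N+1), ((i:ℝ)+1) * f (i+1) * z^i
      = ∑ i ∈ Finset.range (N+1), (i:ℝ) * f i * z^(i-1) := by
  rw [Finset.sum_range_succ, Finset.sum_range_succ']
  simp only [h, Nat.cast_zero, zero_mul, mul_zero, add_zero, zero_add]
  refine Finset.sum_congr rfl fun i _ => ?_
  push_cast [Nat.add_sub_cancel]
  ring

lemma genFun_sum_shift_up (N : ℕ) (f : ℕ → ℝ) (z : ℝ) (h : f N = 0) :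
    ∑ i ∈ Finset.range (N+1), (if i = 0 then 0 else f (i-1)) * z^i
      = z * ∑ i ∈ Finset.range (N+1), f i * z^i := by
  rw [Finset.sum_range_succ', Finset.sum_range_succ, mul_add]
  simp only [h, zero_mul, mul_zero, add_zero, if_pos rfl, reduceIte, Nat.add_sub_cancel,
    Nat.succ_ne_zero]
  rw [Finset.mul_sum]
  refine Finset.sum_congr rfl fun i _ => ?_
  rw [pow_succ]
  ring

lemma genFun_nat_mul_pow (n : ℕ) (z : ℝ) : (n:ℝ) * z^n = z * ((n:ℝ) * z^(n-1)) := by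
  cases n with
  | zero => simp
  | succ m => push_cast [Nat.add_sub_cancel, pow_succ]; ring

/-- If a uniformly finitely supported, differentiable-in-time family of
coefficients `A(k,l)(t)` satisfies the shift ODE system
`(d/dt)A(k,l) = a[(l+1)A(k−1,l+1) − lA(k,l)] + b[(k+1)A(k+1,l−1) − kA(k,l)]
  + c[(l+1)A(k,l+1) − lA(k,l)] + d[A(k−1,l) − A(k,l)]`,
then its generating function `Q(x,y,t) = ∑_{k,l} A(k,l)(t) x^k y^l` satisfies
the PDE `Q_t = b(y−x)Q_x + [a(x−y) + c(1−y)]Q_y + d(x−1)Q`. -/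
theorem genFun_pde_of_shift_ode (A : ℕ → ℕ → ℝ → ℝ) (a b c d : ℝ)
    (S : Finset (ℕ × ℕ))
    (hS : ∀ k l : ℕ, (k, l) ∉ S → ∀ t : ℝ, A k l t = 0)
    (hdiff : ∀ k l : ℕ, Differentiable ℝ (A k l))
    (hode : ∀ (k l : ℕ) (t : ℝ), deriv (A k l) t =
        a * (((l : ℝ) + 1) * (if k = 0 then 0 else A (k - 1) (l + 1) t)
              - (l : ℝ) * A k l t)
      + b * (((k : ℝ) + 1) * (if l = 0 then 0 else A (k + 1) (l - 1) t)
              - (k : ℝ) * A k l t)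
      + c * (((l : ℝ) + 1) * A k (l + 1) t - (l : ℝ) * A k l t)
      + d * ((if k = 0 then 0 else A (k - 1) l t) - A k l t)) :
    ∀ (x y t : ℝ),
      HasDerivAt (fun s : ℝ => ∑' k : ℕ, ∑' l : ℕ, A k l s * x ^ k * y ^ l)
        (b * (y - x) *
            deriv (fun x' : ℝ => ∑' k : ℕ, ∑' l : ℕ, A k l t * x' ^ k * y ^ l) x
          + (a * (x - y) + c * (1 - y)) *
            deriv (fun y' : ℝ => ∑' k : ℕ, ∑' l : ℕ, A k l t * x ^ k * y' ^ l) y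
          + d * (x - 1) * (∑' k : ℕ, ∑' l : ℕ, A k l t * x ^ k * y ^ l)) t := by
  intro x y t
  set N : ℕ := (S.sup fun p => max p.1 p.2) + 1 with hN
  -- vanishing of coefficients with large indices
  have hz : ∀ k l : ℕ, N ≤ k ∨ N ≤ l → ∀ s : ℝ, A k l s = 0 := by
    intro k l h s
    apply hS
    intro hmem
    have hle := Finset.le_sup (f := fun p : ℕ × ℕ => max p.1 p.2) hmem
    simp only [max_le_iff] at hle
    omega
  set R : Finset ℕ := Finset.range (N+1) with hR
  -- the tsum is a finite sum
  have eqQ : ∀ u v s : ℝ, (∑' k : ℕ, ∑' l : ℕ, A k l s * u ^ k * v ^ l)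
      = ∑ k ∈ R, ∑ l ∈ R, A k l s * u ^ k * v ^ l := by
    intro u v s
    have hzero : ∀ k l : ℕ, k ∉ R ∨ l ∉ R → A k l s * u ^ k * v ^ l = 0 := by
      intro k l h
      have : A k l s = 0 := by
        refine hz k l ?_ s
        rcases h with h | h <;> simp only [hR, Finset.mem_range, not_lt] at h <;> omega
      rw [this]; ring
    rw [tsum_eq_sum (s := R) (fun k hk => by
      have : ∀ l : ℕ, A k l s * u ^ k * v ^ l = 0 := fun l => hzero k l (Or.inl hk)
      simp only [this, tsum_zero])]
    refine Finset.sum_congr rfl fun k _ => ?_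
    exact tsum_eq_sum (fun l hl => hzero k l (Or.inr hl))
  have hfun : (fun s : ℝ => ∑' k : ℕ, ∑' l : ℕ, A k l s * x ^ k * y ^ l)
      = fun s => ∑ k ∈ R, ∑ l ∈ R, A k l s * x ^ k * y ^ l := funext fun s => eqQ x y s
  have hfx : (fun x' : ℝ => ∑' k : ℕ, ∑' l : ℕ, A k l t * x' ^ k * y ^ l)
      = fun x' => ∑ k ∈ R, ∑ l ∈ R, A k l t * x' ^ k * y ^ l := funext fun x' => eqQ x' y t
  have hfy : (fun y' : ℝ => ∑' k : ℕ, ∑' l : ℕ, A k l t * x ^ k * y' ^ l)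
      = fun y' => ∑ k ∈ R, ∑ l ∈ R, A k l t * x ^ k * y' ^ l := funext fun y' => eqQ x y' t
  -- the three derivatives of finite sums
  have hx : HasDerivAt (fun x' : ℝ => ∑ k ∈ R, ∑ l ∈ R, A k l t * x' ^ k * y ^ l)
      (∑ k ∈ R, ∑ l ∈ R, A k l t * ((k : ℝ) * x ^ (k - 1)) * y ^ l) x :=
    HasDerivAt.fun_sum fun k _ => HasDerivAt.fun_sum fun l _ =>
      ((hasDerivAt_pow k x).const_mul (A k l t)).mul_const (y ^ l)
  have hy : HasDerivAt (fun y' : ℝ => ∑ k ∈ R, ∑ l ∈ R, A k l t * x ^ k * y' ^ l)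
      (∑ k ∈ R, ∑ l ∈ R, A k l t * x ^ k * ((l : ℝ) * y ^ (l - 1))) y :=
    HasDerivAt.fun_sum fun k _ => HasDerivAt.fun_sum fun l _ =>
      (hasDerivAt_pow l y).const_mul (A k l t * x ^ k)
  have ht : HasDerivAt (fun s : ℝ => ∑ k ∈ R, ∑ l ∈ R, A k l s * x ^ k * y ^ l)
      (∑ k ∈ R, ∑ l ∈ R, deriv (A k l) t * x ^ k * y ^ l) t :=
    HasDerivAt.fun_sum fun k _ => HasDerivAt.fun_sum fun l _ =>
      (((hdiff k l).differentiableAt).hasDerivAt.mul_const (x ^ k)).mul_const (y ^ l)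
  rw [hfun, hfx, hfy, hx.deriv, hy.deriv, eqQ x y t]
  -- abbreviations
  set Tx := ∑ k ∈ R, ∑ l ∈ R, A k l t * ((k : ℝ) * x ^ (k - 1)) * y ^ l with hTx
  set Ty := ∑ k ∈ R, ∑ l ∈ R, A k l t * x ^ k * ((l : ℝ) * y ^ (l - 1)) with hTy
  set T := ∑ k ∈ R, ∑ l ∈ R, A k l t * x ^ k * y ^ l with hT
  -- key algebraic identity
  have key : (∑ k ∈ R, ∑ l ∈ R, deriv (A k l) t * x ^ k * y ^ l)
      = b * (y - x) * Tx + (a * (x - y) + c * (1 - y)) * Ty + d * (x - 1) * T := by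
    have expand : ∀ k l : ℕ, deriv (A k l) t * x ^ k * y ^ l =
        a * ((((l : ℝ) + 1) * (if k = 0 then 0 else A (k - 1) (l + 1) t)) * x ^ k * y ^ l)
      - a * (((l : ℝ) * A k l t) * x ^ k * y ^ l)
      + (b * ((((k : ℝ) + 1) * (if l = 0 then 0 else A (k + 1) (l - 1) t)) * x ^ k * y ^ l)
      - b * (((k : ℝ) * A k l t) * x ^ k * y ^ l))
      + (c * ((((l : ℝ) + 1) * A k (l + 1) t) * x ^ k * y ^ l)
      - c * (((l : ℝ) * A k l t) * x ^ k * y ^ l))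
      + (d * (((if k = 0 then 0 else A (k - 1) l t)) * x ^ k * y ^ l)
      - d * ((A k l t) * x ^ k * y ^ l)) := fun k l => by rw [hode]; ring
    rw [Finset.sum_congr rfl fun k _ => Finset.sum_congr rfl fun l _ => expand k l]
    simp only [Finset.sum_add_distrib, Finset.sum_sub_distrib, ← Finset.mul_sum]
    -- the six sub-sums
    have hSa2 : (∑ k ∈ R, ∑ l ∈ R, ((l : ℝ) * A k l t) * x ^ k * y ^ l) = y * Ty := by
      rw [hTy, Finset.mul_sum]
      refine Finset.sum_congr rfl fun k _ => ?_
      rw [Finset.mul_sum]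
      refine Finset.sum_congr rfl fun l _ => ?_
      linear_combination (A k l t * x ^ k) * genFun_nat_mul_pow l y
    have hSb2 : (∑ k ∈ R, ∑ l ∈ R, ((k : ℝ) * A k l t) * x ^ k * y ^ l) = x * Tx := by
      rw [hTx, Finset.mul_sum]
      refine Finset.sum_congr rfl fun k _ => ?_
      rw [Finset.mul_sum]
      refine Finset.sum_congr rfl fun l _ => ?_
      linear_combination (A k l t * y ^ l) * genFun_nat_mul_pow k x
    -- the l-shift inner sums
    have hF : ∀ k : ℕ, (∑ l ∈ R, ((l : ℝ) + 1) * A k (l + 1) t * y ^ l)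
        = ∑ l ∈ R, (l : ℝ) * A k l t * y ^ (l - 1) :=
      fun k => genFun_sum_shift N (fun l => A k l t) y (hz k (N+1) (Or.inr (by omega)) t)
    have hTy' : Ty = ∑ k ∈ R, (∑ l ∈ R, (l : ℝ) * A k l t * y ^ (l - 1)) * x ^ k := by
      rw [hTy]
      refine Finset.sum_congr rfl fun k _ => ?_
      rw [Finset.sum_mul]
      exact Finset.sum_congr rfl fun l _ => by ring
    have hSc1 : (∑ k ∈ R, ∑ l ∈ R, (((l : ℝ) + 1) * A k (l + 1) t) * x ^ k * y ^ l) = Ty := by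
      rw [hTy']
      refine Finset.sum_congr rfl fun k _ => ?_
      rw [← hF k, Finset.sum_mul]
      exact Finset.sum_congr rfl fun l _ => by ring
    have hSa1 : (∑ k ∈ R, ∑ l ∈ R,
        (((l : ℝ) + 1) * (if k = 0 then 0 else A (k - 1) (l + 1) t)) * x ^ k * y ^ l)
        = x * Ty := by
      have step1 : ∀ k ∈ R, (∑ l ∈ R,
          (((l : ℝ) + 1) * (if k = 0 then 0 else A (k - 1) (l + 1) t)) * x ^ k * y ^ l)
          = (if k = 0 then 0 else ∑ l ∈ R, ((l : ℝ) + 1) * A (k - 1) (l + 1) t * y ^ l) * x ^ k := by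
        intro k _
        by_cases hk : k = 0
        · simp [hk]
        · simp only [hk, if_neg hk, reduceIte]
          rw [Finset.sum_mul]
          exact Finset.sum_congr rfl fun l _ => by ring
      rw [Finset.sum_congr rfl step1,
        genFun_sum_shift_up N (fun k => ∑ l ∈ R, ((l : ℝ) + 1) * A k (l + 1) t * y ^ l) x
          (Finset.sum_eq_zero fun l _ => by rw [hz N (l+1) (Or.inl le_rfl) t]; ring)]
      rw [hTy']
      congr 1
      refine Finset.sum_congr rfl fun k _ => ?_
      rw [hF k]
    have hSd1 : (∑ k ∈ R, ∑ l ∈ R,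
        ((if k = 0 then 0 else A (k - 1) l t)) * x ^ k * y ^ l) = x * T := by
      have step1 : ∀ k ∈ R, (∑ l ∈ R,
          ((if k = 0 then 0 else A (k - 1) l t)) * x ^ k * y ^ l)
          = (if k = 0 then 0 else ∑ l ∈ R, A (k - 1) l t * y ^ l) * x ^ k := by
        intro k _
        by_cases hk : k = 0
        · simp [hk]
        · simp only [hk, if_neg hk, reduceIte]
          rw [Finset.sum_mul]
          exact Finset.sum_congr rfl fun l _ => by ring
      rw [Finset.sum_congr rfl step1,
        genFun_sum_shift_up N (fun k => ∑ l ∈ R, A k l t * y ^ l) x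
          (Finset.sum_eq_zero fun l _ => by rw [hz N l (Or.inl le_rfl) t]; ring)]
      rw [hT]
      congr 1
      refine Finset.sum_congr rfl fun k _ => ?_
      rw [Finset.sum_mul]
      exact Finset.sum_congr rfl fun l _ => by ring
    have hSb1 : (∑ k ∈ R, ∑ l ∈ R,
        (((k : ℝ) + 1) * (if l = 0 then 0 else A (k + 1) (l - 1) t)) * x ^ k * y ^ l)
        = y * Tx := by
      have step1 : ∀ k ∈ R, (∑ l ∈ R,
          (((k : ℝ) + 1) * (if l = 0 then 0 else A (k + 1) (l - 1) t)) * x ^ k * y ^ l)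
          = y * ∑ l ∈ R, (((k : ℝ) + 1) * A (k + 1) l t * x ^ k) * y ^ l := by
        intro k _
        rw [← genFun_sum_shift_up N (fun l => ((k : ℝ) + 1) * A (k + 1) l t * x ^ k) y
          (by simp [hz (k+1) N (Or.inr le_rfl) t])]
        refine Finset.sum_congr rfl fun l _ => ?_
        by_cases hl : l = 0
        · simp [hl]
        · simp only [if_neg hl]
      rw [Finset.sum_congr rfl step1, ← Finset.mul_sum]
      congr 1
      -- ∑ k ∑ l ((k+1) * A (k+1) l t * x^k) * y^l = Tx
      have swap1 : (∑ k ∈ R, ∑ l ∈ R, (((k : ℝ) + 1) * A (k + 1) l t * x ^ k) * y ^ l)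
          = ∑ l ∈ R, ∑ k ∈ R, ((k : ℝ) + 1) * (A (k + 1) l t * y ^ l) * x ^ k := by
        rw [Finset.sum_comm]
        exact Finset.sum_congr rfl fun l _ => Finset.sum_congr rfl fun k _ => by ring
      rw [swap1]
      have step2 : ∀ l ∈ R, (∑ k ∈ R, ((k : ℝ) + 1) * (A (k + 1) l t * y ^ l) * x ^ k)
          = ∑ k ∈ R, (k : ℝ) * (A k l t * y ^ l) * x ^ (k - 1) :=
        fun l _ => genFun_sum_shift N (fun k => A k l t * y ^ l) x
          (by simp [hz (N+1) l (Or.inl (by omega)) t])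
      rw [Finset.sum_congr rfl step2, Finset.sum_comm, hTx]
      exact Finset.sum_congr rfl fun k _ => Finset.sum_congr rfl fun l _ => by ring
    rw [hSa1, hSa2, hSb1, hSb2, hSc1, hSd1]
    ring
  exact key ▸ ht
end
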